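/- Let s = (s₁,…,sₙ) be positive integers, let l be a filter on a set α, and let r : α → ℝ and y : α → ℝⁿ be functions with r(a) > 0 and Σ_{j=1}^{n} y_j(a)² = 1 for all a ∈ α. Setting x_j(a) = y_j(a) / r(a)^{s_j}, one has Σ_{j=1}^{n} x_j(a)² → +∞ along l if and only if r(a) → 0 along l. -/

import Mathlib

open Filter

/-- Let `s = (s₁,…,sₙ)` be positive integers, `l` a filter on `α`, and
`r : α → ℝ`, `y : α → ℝⁿ` with `r a > 0` and `Σ_j y_j(a)² = 1` for all `a`. Setting
`x_j(a) = y_j(a) / r(a)^{s_j}`, one has `Σ_j x_j(a)² → +∞` along `l` iff `r(a) → 0`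
along `l`. -/
theorem sum_sq_tendsto_atTop_iff_tendsto_zero {α : Type*} (n : ℕ) (s : Fin n → ℕ)
    (hs : ∀ j, 0 < s j) (l : Filter α) (r : α → ℝ) (y : α → Fin n → ℝ)
    (hr : ∀ a, 0 < r a) (hy : ∀ a, ∑ j : Fin n, (y a j) ^ 2 = 1) :
    Tendsto (fun a => ∑ j : Fin n, (y a j / (r a) ^ s j) ^ 2) l atTop ↔
      Tendsto r l (nhds 0) := by
  set S := Finset.univ.sup s with hS
  constructor
  · intro h
    rw [Metric.tendsto_nhds]
    intro ε hε
    set ε' := min ε 1 with hε'def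
    have hε'0 : 0 < ε' := lt_min hε one_pos
    have hε'1 : ε' ≤ 1 := min_le_right _ _
    have hB : 0 < ε' ^ (2 * S) := pow_pos hε'0 _
    filter_upwards [h.eventually_gt_atTop ((ε' ^ (2 * S))⁻¹)] with a ha
    rw [Real.dist_eq, sub_zero, abs_of_pos (hr a)]
    have hra0 := hr a
    by_contra hcon
    push_neg at hcon
    have hra : ε' ≤ r a := le_trans (min_le_left _ _) hcon
    have hub : ∑ j : Fin n, (y a j / (r a) ^ s j) ^ 2 ≤ (ε' ^ (2 * S))⁻¹ := by
      calc ∑ j : Fin n, (y a j / (r a) ^ s j) ^ 2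
          ≤ ∑ j : Fin n, (y a j) ^ 2 * (ε' ^ (2 * S))⁻¹ := by
            apply Finset.sum_le_sum
            intro j _
            rw [div_pow, div_eq_mul_inv]
            apply mul_le_mul_of_nonneg_left _ (sq_nonneg _)
            rw [inv_le_inv₀ (by positivity) hB]
            calc ε' ^ (2 * S) ≤ ε' ^ (2 * s j) := by
                  apply pow_le_pow_of_le_one hε'0.le hε'1
                  exact Nat.mul_le_mul_left 2 (Finset.le_sup (Finset.mem_univ j))
              _ ≤ (r a) ^ (2 * s j) := pow_le_pow_left₀ hε'0.le hra _
              _ = ((r a) ^ s j) ^ 2 := by rw [← pow_mul, mul_comm]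
        _ = (ε' ^ (2 * S))⁻¹ := by rw [← Finset.sum_mul, hy a, one_mul]
    exact absurd hub (not_le.mpr ha)
  · intro h
    have hin : Tendsto r l (nhdsWithin 0 (Set.Ioi 0)) :=
      tendsto_nhdsWithin_iff.mpr ⟨h, Eventually.of_forall fun a => hr a⟩
    have h1 : Tendsto (fun a => ((r a)⁻¹) ^ 2) l atTop :=
      (tendsto_pow_atTop (two_ne_zero)).comp (tendsto_inv_nhdsGT_zero.comp hin)
    apply tendsto_atTop_mono' _ _ h1
    have hlt1 : ∀ᶠ a in l, r a < 1 := by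
      have := h.eventually (eventually_lt_nhds (show (0:ℝ) < 1 by norm_num))
      exact this
    filter_upwards [hlt1] with a ha1
    have hr0 := hr a
    calc ((r a)⁻¹) ^ 2 = ∑ j : Fin n, (y a j) ^ 2 * ((r a) ^ 2)⁻¹ := by
          rw [← Finset.sum_mul, hy a, one_mul, inv_pow]
      _ ≤ ∑ j : Fin n, (y a j / (r a) ^ s j) ^ 2 := by
          apply Finset.sum_le_sum
          intro j _
          rw [div_pow, div_eq_mul_inv]
          apply mul_le_mul_of_nonneg_left _ (sq_nonneg _)
          rw [inv_le_inv₀ (by positivity) (by positivity)]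
          calc ((r a) ^ s j) ^ 2 ≤ ((r a) ^ 1) ^ 2 := by
                apply pow_le_pow_left₀ (by positivity)
                exact pow_le_pow_of_le_one hr0.le ha1.le (hs j)
            _ = (r a) ^ 2 := by rw [pow_one]
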